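/- In a real normed space with linearly independent vectors x, y, the function h₊(t) := ‖x/‖x‖ + (y+t·x)/‖y+t·x‖‖ tends to 0 as t → −∞ and to 2 as t → +∞, and h₋(t) := ‖x/‖x‖ − (y+t·x)/‖y+t·x‖‖ tends to 2 as t → −∞ and to 0 as t → +∞. -/

import Mathlib

open Filter Topology

theorem stmt_10 {X : Type*} [NormedAddCommGroup X] [NormedSpace ℝ X]
    (x y : X) (h : LinearIndependent ℝ ![x, y]) :
    Filter.Tendsto (fun t : ℝ => ‖(‖x‖)⁻¹ • x + (‖y + t • x‖)⁻¹ • (y + t • x)‖)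
        Filter.atBot (nhds 0) ∧
    Filter.Tendsto (fun t : ℝ => ‖(‖x‖)⁻¹ • x + (‖y + t • x‖)⁻¹ • (y + t • x)‖)
        Filter.atTop (nhds 2) ∧
    Filter.Tendsto (fun t : ℝ => ‖(‖x‖)⁻¹ • x - (‖y + t • x‖)⁻¹ • (y + t • x)‖)
        Filter.atBot (nhds 2) ∧
    Filter.Tendsto (fun t : ℝ => ‖(‖x‖)⁻¹ • x - (‖y + t • x‖)⁻¹ • (y + t • x)‖)
        Filter.atTop (nhds 0) := by
  have hx : x ≠ 0 := by
    have := h.ne_zero 0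
    simpa [Function.comp_def] using this
  have hnx : ‖x‖ ≠ 0 := norm_ne_zero_iff.2 hx
  set u : X := (‖x‖)⁻¹ • x with hu
  have hnu : ‖u‖ = 1 := by
    rw [hu, norm_smul, norm_inv, norm_norm, inv_mul_cancel₀ hnx]
  set f : ℝ → X := fun t => (‖y + t • x‖)⁻¹ • (y + t • x) with hf
  -- key decomposition for t ≠ 0
  have hdec : ∀ t : ℝ, t ≠ 0 → y + t • x = t • (x + t⁻¹ • y) := by
    intro t ht
    rw [smul_add, smul_smul, mul_inv_cancel₀ ht, one_smul, add_comm]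
  have hg : Tendsto (fun t : ℝ => x + t⁻¹ • y) atTop (nhds x) := by
    have hc : Continuous (fun s : ℝ => x + s • y) :=
      continuous_const.add (continuous_id.smul continuous_const)
    have := (hc.tendsto 0).comp tendsto_inv_atTop_zero
    simpa [Function.comp_def] using this
  have hg' : Tendsto (fun t : ℝ => x + t⁻¹ • y) atBot (nhds x) := by
    have hc : Continuous (fun s : ℝ => x + s • y) :=
      continuous_const.add (continuous_id.smul continuous_const)
    have hinv : Tendsto (fun t : ℝ => t⁻¹) atBot (nhds 0) := by
      have h1 : Tendsto (fun t : ℝ => (-t)⁻¹) atBot (nhds 0) :=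
        tendsto_inv_atTop_zero.comp tendsto_neg_atBot_atTop
      have h2 := h1.neg
      rw [neg_zero] at h2
      refine h2.congr fun t => ?_
      rw [inv_neg, neg_neg]
    have := (hc.tendsto 0).comp hinv
    simpa [Function.comp_def] using this
  have hlim : Tendsto (fun t : ℝ => (‖x + t⁻¹ • y‖)⁻¹ • (x + t⁻¹ • y)) atTop (nhds u) :=
    (hg.norm.inv₀ hnx).smul hg
  have hlim' : Tendsto (fun t : ℝ => (‖x + t⁻¹ • y‖)⁻¹ • (x + t⁻¹ • y)) atBot (nhds u) :=
    (hg'.norm.inv₀ hnx).smul hg'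
  have ftop : Tendsto f atTop (nhds u) := by
    apply hlim.congr'
    filter_upwards [eventually_gt_atTop (0 : ℝ)] with t ht
    have ht' : t ≠ 0 := ne_of_gt ht
    rw [hf]
    simp only
    rw [hdec t ht', norm_smul, Real.norm_eq_abs, abs_of_pos ht, smul_smul]
    congr 1
    field_simp
  have fbot : Tendsto f atBot (nhds (-u)) := by
    have : Tendsto (fun t : ℝ => -((‖x + t⁻¹ • y‖)⁻¹ • (x + t⁻¹ • y))) atBot (nhds (-u)) :=
      hlim'.neg
    apply this.congr'
    filter_upwards [eventually_lt_atBot (0 : ℝ)] with t ht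
    have ht' : t ≠ 0 := ne_of_lt ht
    rw [hf]
    simp only
    rw [hdec t ht', norm_smul, Real.norm_eq_abs, abs_of_neg ht, smul_smul, ← neg_smul]
    congr 1
    field_simp
  have h2 : ‖u + u‖ = 2 := by
    rw [← two_smul ℝ u, norm_smul, hnu]
    norm_num
  have h2' : ‖u - -u‖ = 2 := by
    rw [sub_neg_eq_add]; exact h2
  refine ⟨?_, ?_, ?_, ?_⟩
  · have := (fbot.const_add u).norm
    rw [add_neg_cancel, norm_zero] at this
    exact this
  · have := (ftop.const_add u).norm
    rw [h2] at this
    exact this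
  · have := (fbot.const_sub u).norm
    rw [h2'] at this
    exact this
  · have := (ftop.const_sub u).norm
    rw [sub_self, norm_zero] at this
    exact this
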